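/- Up to isomorphism there are exactly 4 nilpotent Jordan algebras of dimension 3 over an algebraically closed field K of characteristic ≠ 2: (1) the abelian algebra; (2) a² = b (direct sum with trivial 1-dim algebra); (3) a² = c, b² = c; (4) a² = b, a∘b = c. -/

import Mathlib

/-- A map `f : M → M → N` is `K`-bilinear. -/
def IsBilin (K : Type*) [Field K] {M N : Type*} [AddCommGroup M] [Module K M]
    [AddCommGroup N] [Module K N] (f : M → M → N) : Prop :=
  (∀ x x' y, f (x + x') y = f x y + f x' y) ∧
  (∀ x y y', f x (y + y') = f x y + f x y') ∧
  (∀ (a : K) (x y), f (a • x) y = a • f x y) ∧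
  (∀ (a : K) (x y), f x (a • y) = a • f x y)

/-- `mul` makes `M` into a Jordan algebra over `K`: a commutative bilinear product
satisfying the Jordan identity `x² ∘ (x ∘ y) = x ∘ (x² ∘ y)`. -/
def IsJordanAlg (K : Type*) [Field K] {M : Type*} [AddCommGroup M] [Module K M]
    (mul : M → M → M) : Prop :=
  IsBilin K mul ∧ (∀ x y, mul x y = mul y x) ∧
  ∀ x y, mul (mul x x) (mul x y) = mul x (mul (mul x x) y)

/-- A Jordan 2-cocycle from `(M, mul)` to `V`. -/
def IsJCocycle (K : Type*) [Field K] {M V : Type*} [AddCommGroup M] [Module K M]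
    [AddCommGroup V] [Module K V] (mul : M → M → M) (θ : M → M → V) : Prop :=
  IsBilin K θ ∧ (∀ x y, θ x y = θ y x) ∧
  ∀ x y, θ (mul x x) (mul x y) = θ x (mul (mul x x) y)

/-- Lower central series: `lcs K mul 0 = c¹(J) = J`, `lcs K mul (n+1) = c^{n+2}(J) = c^{n+1}(J) ∘ J`. -/
def lcs (K : Type*) [Field K] {M : Type*} [AddCommGroup M] [Module K M]
    (mul : M → M → M) : ℕ → Submodule K M
  | 0 => ⊤
  | n + 1 => Submodule.span K {z | ∃ x, x ∈ lcs K mul n ∧ ∃ y, z = mul x y}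

/-- A Jordan algebra is nilpotent if its lower central series reaches zero. -/
def IsNilpotentAlg (K : Type*) [Field K] {M : Type*} [AddCommGroup M] [Module K M]
    (mul : M → M → M) : Prop :=
  ∃ n, lcs K mul n = ⊥

/-- Isomorphism of (Jordan) algebras. -/
def JIso (K : Type*) [Field K] {M N : Type*} [AddCommGroup M] [Module K M]
    [AddCommGroup N] [Module K N] (mul1 : M → M → M) (mul2 : N → N → N) : Prop :=
  ∃ e : M ≃ₗ[K] N, ∀ x y, e (mul1 x y) = mul2 (e x) (e y)

/-- Central extension product on `M × V` induced by `θ`. -/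
def extMul (K : Type*) [Field K] {M V : Type*} [AddCommGroup M] [Module K M]
    [AddCommGroup V] [Module K V] (mul : M → M → M) (θ : M → M → V) :
    M × V → M × V → M × V :=
  fun p q => (mul p.1 q.1, θ p.1 q.1)

/-- 3-dim algebra, all products zero. -/
def m31 (K : Type*) [Field K] : (Fin 3 → K) → (Fin 3 → K) → (Fin 3 → K) := fun _ _ => 0

/-- 3-dim algebra, `a² = b`. -/
def m32 (K : Type*) [Field K] : (Fin 3 → K) → (Fin 3 → K) → (Fin 3 → K) :=
  fun x y => ![0, x 0 * y 0, 0]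

/-- 3-dim algebra, `a² = c`, `b² = c`. -/
def m33 (K : Type*) [Field K] : (Fin 3 → K) → (Fin 3 → K) → (Fin 3 → K) :=
  fun x y => ![0, 0, x 0 * y 0 + x 1 * y 1]

/-- 3-dim algebra, `a² = b`, `a∘b = c`. -/
def m34 (K : Type*) [Field K] : (Fin 3 → K) → (Fin 3 → K) → (Fin 3 → K) :=
  fun x y => ![0, x 0 * y 0, x 0 * y 1 + x 1 * y 0]

section Aux

open Module Submodule

variable {K : Type*} [Field K] {M N : Type*} [AddCommGroup M] [Module K M]
  [AddCommGroup N] [Module K N]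

/-- Package an `IsBilin` map as a bilinear `LinearMap`. -/
noncomputable def IsBilin.lm2 {f : M → M → N} (h : IsBilin K f) : M →ₗ[K] M →ₗ[K] N :=
  LinearMap.mk₂ K f h.1 h.2.2.1 h.2.1 h.2.2.2

@[simp] lemma IsBilin.lm2_apply {f : M → M → N} (h : IsBilin K f) (x y : M) :
    h.lm2 x y = f x y := rfl

lemma mul_mem_lcs_succ {mul : M → M → M} {n : ℕ} {x : M} (hx : x ∈ lcs K mul n) (y : M) :
    mul x y ∈ lcs K mul (n + 1) :=
  Submodule.subset_span ⟨x, hx, y, rfl⟩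

lemma mul_mem_lcs_one (mul : M → M → M) (x y : M) : mul x y ∈ lcs K mul 1 :=
  mul_mem_lcs_succ (by trivial) y

lemma lcs_succ_le (mul : M → M → M) : ∀ n, lcs K mul (n + 1) ≤ lcs K mul n := by
  intro n
  induction n with
  | zero => exact le_top
  | succ n ih =>
    refine Submodule.span_le.2 ?_
    rintro z ⟨x, hx, y, rfl⟩
    exact mul_mem_lcs_succ (ih hx) y

lemma lcs_antitone (mul : M → M → M) : Antitone (lcs K mul) :=
  antitone_nat_of_succ_le (lcs_succ_le mul)

lemma lcs_eq_of_succ_eq {mul : M → M → M} {n : ℕ} (h : lcs K mul (n + 1) = lcs K mul n) :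
    ∀ m, n ≤ m → lcs K mul m = lcs K mul n := by
  intro m hm
  induction m with
  | zero =>
    have h0 : n = 0 := Nat.le_zero.mp hm
    rw [h0]
  | succ m ih =>
    rcases Nat.lt_or_ge n (m+1) with h1 | h1
    · have hm' : n ≤ m := by omega
      have := ih hm'
      show Submodule.span K _ = _
      rw [show (lcs K mul m) = lcs K mul n from this]
      exact h
    · have : n = m + 1 := by omega
      simp [this]

lemma lcs_succ_lt {mul : M → M → M} (hnil : ∃ n, lcs K mul n = ⊥) {n : ℕ}
    (h : lcs K mul n ≠ ⊥) : lcs K mul (n + 1) < lcs K mul n := by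
  rcases lt_or_eq_of_le (lcs_succ_le (K := K) mul n) with h1 | h1
  · exact h1
  · exfalso
    obtain ⟨N, hN⟩ := hnil
    have := lcs_eq_of_succ_eq h1 (max n N) (le_max_left _ _)
    have h2 : lcs K mul (max n N) ≤ lcs K mul N := lcs_antitone mul (le_max_right _ _)
    rw [this, hN, le_bot_iff] at h2
    exact h h2

lemma lcs_succ_eq_bot_iff {mul : M → M → M} {n : ℕ} :
    lcs K mul (n + 1) = ⊥ ↔ ∀ x ∈ lcs K mul n, ∀ y, mul x y = 0 := by
  constructor
  · intro h x hx y
    have := mul_mem_lcs_succ hx y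
    rw [h] at this
    simpa using this
  · intro h
    rw [eq_bot_iff]
    refine Submodule.span_le.2 ?_
    rintro z ⟨x, hx, y, rfl⟩
    simp [h x hx y]

lemma lcs_succ_le_of {mul : M → M → M} {p : Submodule K M} {n : ℕ}
    (h : ∀ x ∈ lcs K mul n, ∀ y, mul x y ∈ p) : lcs K mul (n + 1) ≤ p :=
  Submodule.span_le.2 (by rintro z ⟨x, hx, y, rfl⟩; exact h x hx y)

lemma jiso_of_basis {ι : Type*} [Fintype ι] {mul : M → M → M} {mul2 : N → N → N}
    (h1 : IsBilin K mul) (h2 : IsBilin K mul2) (B : Basis ι K M) (C : Basis ι K N)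
    (h : ∀ i j, (B.equiv C (Equiv.refl ι)) (mul (B i) (B j)) = mul2 (C i) (C j)) :
    JIso K mul mul2 := by
  set e := B.equiv C (Equiv.refl ι) with he
  refine ⟨e, ?_⟩
  have key : h1.lm2.compr₂ e.toLinearMap = h2.lm2.compl₁₂ e.toLinearMap e.toLinearMap := by
    refine LinearMap.ext_basis B B ?_
    intro i j
    simp only [LinearMap.compr₂_apply, LinearMap.compl₁₂_apply, IsBilin.lm2_apply,
      LinearEquiv.coe_coe]
    rw [h i j, Basis.equiv_apply, Basis.equiv_apply]
    simp
  intro x y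
  have := DFunLike.congr_fun (DFunLike.congr_fun key x) y
  simpa using this

lemma polarize {θ : M → M → K} (hb : IsBilin K θ) (hs : ∀ x y, θ x y = θ y x)
    (h2 : (2 : K) ≠ 0) (p : Submodule K M) (h0 : ∀ x ∈ p, θ x x = 0) :
    ∀ x ∈ p, ∀ y ∈ p, θ x y = 0 := by
  intro x hx y hy
  have hxy := h0 (x + y) (p.add_mem hx hy)
  rw [hb.1, hb.2.1, hb.2.1, h0 x hx, h0 y hy, hs y x] at hxy
  have : (2 : K) * θ x y = 0 := by ring_nf; linear_combination hxy
  rcases mul_eq_zero.mp this with h | h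
  · exact absurd h h2
  · exact h

lemma nonIso_of_zero {mul1 : M → M → M} {mul2 : N → N → N}
    (h1 : ∀ x y, mul1 x y = 0) (u v : N) (h : mul2 u v ≠ 0) : ¬ JIso K mul1 mul2 := by
  rintro ⟨e, he⟩
  have := he (e.symm u) (e.symm v)
  rw [h1] at this
  simp only [map_zero, LinearEquiv.apply_symm_apply] at this
  exact h this.symm

end Aux

section Concrete

variable (K : Type*) [Field K]

lemma jordan_m31 : IsJordanAlg K (m31 K) := by
  refine ⟨⟨?_, ?_, ?_, ?_⟩, ?_, ?_⟩ <;> intros <;> simp [m31]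

lemma nilp_m31 : IsNilpotentAlg K (m31 K) := by
  refine ⟨1, lcs_succ_eq_bot_iff.mpr ?_⟩
  intro x _ y
  rfl

lemma jordan_m32 : IsJordanAlg K (m32 K) := by
  refine ⟨⟨?_, ?_, ?_, ?_⟩, ?_, ?_⟩ <;> intros <;> funext i <;> fin_cases i <;>
    simp [m32] <;> ring

lemma lcs_m32_le : ∀ x ∈ lcs K (m32 K) 1, x 0 = 0 := by
  intro x hx
  have h : lcs K (m32 K) 1 ≤ LinearMap.ker (LinearMap.proj 0 : (Fin 3 → K) →ₗ[K] K) := by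
    refine Submodule.span_le.2 ?_
    rintro z ⟨u, -, v, rfl⟩
    simp [m32, LinearMap.mem_ker]
  simpa using h hx

lemma nilp_m32 : IsNilpotentAlg K (m32 K) := by
  refine ⟨2, lcs_succ_eq_bot_iff.mpr ?_⟩
  intro x hx y
  have h0 := lcs_m32_le K x hx
  funext i; fin_cases i <;> simp [m32, h0]

lemma jordan_m33 : IsJordanAlg K (m33 K) := by
  refine ⟨⟨?_, ?_, ?_, ?_⟩, ?_, ?_⟩ <;> intros <;> funext i <;> fin_cases i <;>
    simp [m33] <;> ring

lemma lcs_m33_le : ∀ x ∈ lcs K (m33 K) 1, x 0 = 0 ∧ x 1 = 0 := by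
  intro x hx
  have h : lcs K (m33 K) 1 ≤ LinearMap.ker (LinearMap.proj 0 : (Fin 3 → K) →ₗ[K] K) ⊓
      LinearMap.ker (LinearMap.proj 1 : (Fin 3 → K) →ₗ[K] K) := by
    refine Submodule.span_le.2 ?_
    rintro z ⟨u, -, v, rfl⟩
    simp [m33, LinearMap.mem_ker, Submodule.mem_inf]
  have := h hx
  rw [Submodule.mem_inf] at this
  simpa using this

lemma nilp_m33 : IsNilpotentAlg K (m33 K) := by
  refine ⟨2, lcs_succ_eq_bot_iff.mpr ?_⟩
  intro x hx y
  obtain ⟨h0, h1⟩ := lcs_m33_le K x hx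
  funext i; fin_cases i <;> simp [m33, h0, h1]

lemma jordan_m34 : IsJordanAlg K (m34 K) := by
  refine ⟨⟨?_, ?_, ?_, ?_⟩, ?_, ?_⟩ <;> intros <;> funext i <;> fin_cases i <;>
    simp [m34] <;> ring

lemma lcs_m34_le1 : ∀ x ∈ lcs K (m34 K) 1, x 0 = 0 := by
  intro x hx
  have h : lcs K (m34 K) 1 ≤ LinearMap.ker (LinearMap.proj 0 : (Fin 3 → K) →ₗ[K] K) := by
    refine Submodule.span_le.2 ?_
    rintro z ⟨u, -, v, rfl⟩
    simp [m34, LinearMap.mem_ker]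
  simpa using h hx

lemma lcs_m34_le2 : ∀ x ∈ lcs K (m34 K) 2, x 0 = 0 ∧ x 1 = 0 := by
  intro x hx
  have h : lcs K (m34 K) 2 ≤ LinearMap.ker (LinearMap.proj 0 : (Fin 3 → K) →ₗ[K] K) ⊓
      LinearMap.ker (LinearMap.proj 1 : (Fin 3 → K) →ₗ[K] K) := by
    refine Submodule.span_le.2 ?_
    rintro z ⟨u, hu, v, rfl⟩
    have h0 := lcs_m34_le1 K u hu
    simp [m34, LinearMap.mem_ker, Submodule.mem_inf, h0]
  have := h hx
  rw [Submodule.mem_inf] at this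
  simpa using this

lemma nilp_m34 : IsNilpotentAlg K (m34 K) := by
  refine ⟨3, lcs_succ_eq_bot_iff.mpr ?_⟩
  intro x hx y
  obtain ⟨h0, h1⟩ := lcs_m34_le2 K x hx
  funext i; fin_cases i <;> simp [m34, h0, h1]

lemma not_jiso_m32_m33 : ¬ JIso K (m32 K) (m33 K) := by
  rintro ⟨e, he⟩
  have key : ∀ x : Fin 3 → K, x 0 = 0 → (e x) 0 = 0 ∧ (e x) 1 = 0 := by
    intro x hx
    have hz : ∀ u, m33 K (e x) u = 0 := by
      intro u
      have h := he x (e.symm u)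
      rw [show m32 K x (e.symm u) = 0 by
        funext i; fin_cases i <;> simp [m32, hx]] at h
      simp only [map_zero, LinearEquiv.apply_symm_apply] at h
      exact h.symm
    constructor
    · have := congrFun (hz ![1, 0, 0]) 2
      simpa [m33] using this
    · have := congrFun (hz ![0, 1, 0]) 2
      simpa [m33] using this
  obtain ⟨hx0, hx1⟩ := key ![0, 1, 0] (by simp)
  obtain ⟨hy0, hy1⟩ := key ![0, 0, 1] (by simp)
  set s := e ![0, 1, 0] 2 with hs_def
  set t := e ![0, 0, 1] 2 with ht_def
  have h1 : e (t • (![0, 1, 0] : Fin 3 → K) - s • ![0, 0, 1]) = 0 := by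
    rw [map_sub, map_smul, map_smul]
    funext i; fin_cases i <;>
      simp [hx0, hx1, hy0, hy1, ← hs_def, ← ht_def] <;> ring
  have h2 : t • (![0, 1, 0] : Fin 3 → K) - s • ![0, 0, 1] = 0 :=
    e.map_eq_zero_iff.mp h1
  have ht : t = 0 := by have := congrFun h2 1; simpa using this
  have hs : s = 0 := by
    have := congrFun h2 2
    simp [ht] at this
    simpa using this
  have hz : e (![0, 0, 1] : Fin 3 → K) = 0 := by
    funext i; fin_cases i <;> simp [hy0, hy1, ← ht_def, ht]
  have := e.map_eq_zero_iff.mp hz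
  have := congrFun this 2
  simp at this

lemma not_jiso_m34_aux {mul1 : (Fin 3 → K) → (Fin 3 → K) → (Fin 3 → K)} (w : Fin 3 → K)
    (hp : ∀ x y, ∃ t : K, mul1 x y = t • w) : ¬ JIso K mul1 (m34 K) := by
  rintro ⟨e, he⟩
  have key : ∀ u v : Fin 3 → K, ∃ t : K, m34 K u v = t • (e w) := by
    intro u v
    obtain ⟨t, ht⟩ := hp (e.symm u) (e.symm v)
    refine ⟨t, ?_⟩
    have h := he (e.symm u) (e.symm v)
    rw [ht, map_smul] at h
    simp only [LinearEquiv.apply_symm_apply] at h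
    exact h.symm
  obtain ⟨t1, h1⟩ := key ![1, 0, 0] ![1, 0, 0]
  obtain ⟨t2, h2⟩ := key ![1, 0, 0] ![0, 1, 0]
  have e11 : (1 : K) = t1 * (e w) 1 := by have := congrFun h1 1; simpa [m34] using this
  have e12 : (0 : K) = t1 * (e w) 2 := by have := congrFun h1 2; simpa [m34] using this
  have e22 : (1 : K) = t2 * (e w) 2 := by have := congrFun h2 2; simpa [m34] using this
  have ht1 : t1 ≠ 0 := by
    intro h
    rw [h, zero_mul] at e11
    exact one_ne_zero e11
  have hz2 : (e w) 2 = 0 := by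
    rcases mul_eq_zero.mp e12.symm with h | h
    · exact absurd h ht1
    · exact h
  rw [hz2, mul_zero] at e22
  exact one_ne_zero e22

lemma m32_prod (x y : Fin 3 → K) : m32 K x y = (x 0 * y 0) • ![0, 1, 0] := by
  funext i; fin_cases i <;> simp [m32]

lemma m33_prod (x y : Fin 3 → K) : m33 K x y = (x 0 * y 0 + x 1 * y 1) • ![0, 0, 1] := by
  funext i; fin_cases i <;> simp [m33]

end Concrete


section PBF
variable (K : Type*) [Field K]

lemma pbf0 : (Pi.basisFun K (Fin 3)) 0 = ![(1 : K), 0, 0] := by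
  funext t; fin_cases t <;> simp

lemma pbf1 : (Pi.basisFun K (Fin 3)) 1 = ![(0 : K), 1, 0] := by
  funext t; fin_cases t <;> simp

lemma pbf2 : (Pi.basisFun K (Fin 3)) 2 = ![(0 : K), 0, 1] := by
  funext t; fin_cases t <;> simp

end PBF

section Classify

open Module Submodule

lemma lcs_zero {K : Type*} [Field K] {M : Type*} [AddCommGroup M] [Module K M]
    (mul : M → M → M) : lcs K mul 0 = ⊤ := rfl

lemma classify (K : Type*) [Field K] [IsAlgClosed K] (h2 : (2 : K) ≠ 0)
    {M : Type*} [AddCommGroup M] [Module K M] (mul : M → M → M)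
    (h3 : Module.finrank K M = 3) (hJ : IsJordanAlg K mul) (hN : IsNilpotentAlg K mul) :
    JIso K mul (m31 K) ∨ JIso K mul (m32 K) ∨ JIso K mul (m33 K) ∨ JIso K mul (m34 K) := by
  obtain ⟨hb, hcm, hjd⟩ := hJ
  have hfd : FiniteDimensional K M := Module.finite_of_finrank_pos (by rw [h3]; norm_num)
  have htopbot : (⊤ : Submodule K M) ≠ ⊥ := by
    intro h
    have h0 : finrank K M = 0 := by
      rw [← finrank_top K M, h, finrank_bot K M]
    rw [h3] at h0
    exact three_ne_zero h0
  have hlt1 : lcs K mul 1 < ⊤ := by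
    have := lcs_succ_lt hN (n := 0) (by rw [lcs_zero]; exact htopbot)
    rwa [lcs_zero] at this
  have hd1 : finrank K (lcs K mul 1) < 3 := by
    have := Submodule.finrank_lt_finrank_of_lt hlt1
    rwa [finrank_top, h3] at this
  have hcases : finrank K (lcs K mul 1) = 0 ∨ finrank K (lcs K mul 1) = 1 ∨
      finrank K (lcs K mul 1) = 2 := by omega
  rcases hcases with hcase | hcase | hcase
  · -- abelian case
    have hJ2bot : lcs K mul 1 = ⊥ := Submodule.finrank_eq_zero.mp hcase
    have hz : ∀ x y, mul x y = 0 := by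
      intro x y
      have := mul_mem_lcs_one (K := K) mul x y
      rw [hJ2bot] at this
      simpa using this
    refine Or.inl ?_
    have e : M ≃ₗ[K] (Fin 3 → K) := LinearEquiv.ofFinrankEq _ _ (by rw [h3]; simp)
    exact ⟨e, fun x y => by rw [hz]; simp [m31]⟩
  · -- dim J² = 1
    have hJ2ne : lcs K mul 1 ≠ ⊥ := by
      intro h
      rw [h] at hcase
      simp [finrank_bot] at hcase
    obtain ⟨c, hcJ2, hc0⟩ := Submodule.ne_bot_iff _ |>.mp hJ2ne
    have hspan : Submodule.span K {c} = lcs K mul 1 := by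
      refine Submodule.eq_of_le_of_finrank_le ((Submodule.span_singleton_le_iff_mem _ _).mpr hcJ2) ?_
      rw [hcase, finrank_span_singleton hc0]
    -- a linear functional with φ c = 1
    obtain ⟨φ, hφ⟩ := LinearMap.exists_extend
      (((LinearEquiv.toSpanNonzeroSingleton K M c hc0).symm :
        (Submodule.span K {c}) ≃ₗ[K] K) : (Submodule.span K {c}) →ₗ[K] K)
    have hφc : φ c = 1 := by
      have h1 := DFunLike.congr_fun hφ ((LinearEquiv.toSpanNonzeroSingleton K M c hc0) 1)
      simp only [LinearMap.coe_comp, Function.comp_apply, LinearEquiv.coe_coe,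
        LinearEquiv.symm_apply_apply, Submodule.coe_subtype] at h1
      rw [LinearEquiv.toSpanNonzeroSingleton_one] at h1
      simpa using h1
    set θ : M → M → K := fun x y => φ (mul x y) with hθdef
    have hmulc : ∀ x y, mul x y = θ x y • c := by
      intro x y
      have hmem : mul x y ∈ Submodule.span K {c} := by
        rw [hspan]; exact mul_mem_lcs_one (K := K) mul x y
      obtain ⟨t, ht⟩ := Submodule.mem_span_singleton.mp hmem
      have : θ x y = t := by
        simp only [hθdef, ← ht, map_smul, hφc, smul_eq_mul, mul_one]
      rw [this, ht]
    have hbθ : IsBilin K θ := by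
      refine ⟨?_, ?_, ?_, ?_⟩ <;> intros <;> simp only [hθdef]
      · rw [hb.1, map_add]
      · rw [hb.2.1, map_add]
      · rw [hb.2.2.1, map_smul]
      · rw [hb.2.2.2, map_smul]
    have hsθ : ∀ x y, θ x y = θ y x := by
      intro x y; simp only [hθdef]; rw [hcm]
    have hθxc : ∀ x, θ x c = 0 := by
      intro x
      by_contra hne
      have hcn : ∀ n, c ∈ lcs K mul n := by
        intro n
        induction n with
        | zero => trivial
        | succ n ih =>
          have hkey : mul c ((θ x c)⁻¹ • x) = c := by
            rw [hb.2.2.2, hmulc c x, hsθ c x, smul_smul, inv_mul_cancel₀ hne, one_smul]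
          rw [← hkey]
          exact mul_mem_lcs_succ ih _
      obtain ⟨n, hn⟩ := hN
      have := hcn n
      rw [hn] at this
      exact hc0 (by simpa using this)
    have hθcx : ∀ x, θ c x = 0 := fun x => by rw [hsθ]; exact hθxc x
    have hθne : ∃ u, θ u u ≠ 0 := by
      by_contra hall
      push_neg at hall
      have hz := polarize hbθ hsθ h2 ⊤ (fun x _ => hall x)
      refine hJ2ne ?_
      have : lcs K mul (0 + 1) = ⊥ := lcs_succ_eq_bot_iff.mpr (fun x _ y => by
        rw [hmulc, hz x trivial y trivial, zero_smul])
      simpa using this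
    obtain ⟨u, hu⟩ := hθne
    obtain ⟨s, hs⟩ := IsAlgClosed.exists_pow_nat_eq ((θ u u)⁻¹) (n := 2) two_pos
    set a := s • u with hadef
    have hθaa : θ a a = 1 := by
      rw [hadef, hbθ.2.2.1, hbθ.2.2.2, smul_eq_mul, smul_eq_mul, ← mul_assoc, ← sq, hs,
        inv_mul_cancel₀ hu]
    set Θ := hbθ.lm2 with hΘdef
    have hmemW : ∀ x, x ∈ LinearMap.ker Θ ↔ ∀ y, θ x y = 0 := by
      intro x
      rw [LinearMap.mem_ker]
      constructor
      · intro h y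
        have := DFunLike.congr_fun h y
        simpa [hΘdef] using this
      · intro h
        ext y
        simpa [hΘdef] using h y
    have hcW : c ∈ LinearMap.ker Θ := (hmemW c).mpr hθcx
    have haW : a ∉ LinearMap.ker Θ := by
      intro h
      have := (hmemW a).mp h a
      rw [hθaa] at this
      exact one_ne_zero this
    have hWlt : LinearMap.ker Θ < ⊤ := lt_top_iff_ne_top.mpr (fun h => haW (h ▸ Submodule.mem_top))
    have hdW3 : finrank K (LinearMap.ker Θ) < 3 := by
      have := Submodule.finrank_lt_finrank_of_lt hWlt
      rwa [finrank_top, h3] at this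
    have hdW1 : 1 ≤ finrank K (LinearMap.ker Θ) := by
      have hle : Submodule.span K {c} ≤ LinearMap.ker Θ :=
        (Submodule.span_singleton_le_iff_mem _ _).mpr hcW
      have := Submodule.finrank_mono hle
      rwa [finrank_span_singleton hc0] at this
    have hWcases : finrank K (LinearMap.ker Θ) = 1 ∨ finrank K (LinearMap.ker Θ) = 2 := by omega
    rcases hWcases with hWcase | hWcase
    · -- rank 2 : m33
      have hle : Submodule.span K {c} ≤ LinearMap.ker Θ :=
        (Submodule.span_singleton_le_iff_mem _ _).mpr hcW
      set La := Θ a with hLadef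
      have hLa_apply : ∀ y, La y = θ a y := fun y => rfl
      have hrange : LinearMap.range La = ⊤ := by
        rw [LinearMap.range_eq_top]
        intro t
        refine ⟨t • a, ?_⟩
        rw [hLa_apply, hbθ.2.2.2, hθaa, smul_eq_mul, mul_one]
      have hkerd : finrank K (LinearMap.ker La) = 2 := by
        have hrn := LinearMap.finrank_range_add_finrank_ker La
        rw [hrange, finrank_top, h3, Module.finrank_self] at hrn
        omega
      have hbex : ∃ w ∈ LinearMap.ker La, θ w w ≠ 0 := by
        by_contra hall
        push_neg at hall
        have hpol := polarize hbθ hsθ h2 (LinearMap.ker La) hall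
        have hker_le : LinearMap.ker La ≤ LinearMap.ker Θ := by
          intro x hx
          rw [hmemW]
          intro y
          have hxa : θ a x = 0 := by
            have := hx
            rw [LinearMap.mem_ker, hLadef] at this
            exact this ▸ rfl
          have hya : y - (θ a y) • a ∈ LinearMap.ker La := by
            rw [LinearMap.mem_ker, hLa_apply, sub_eq_add_neg, hbθ.2.1,
              show -(θ a y • a) = (-(θ a y)) • a by rw [neg_smul],
              hbθ.2.2.2, hθaa, smul_eq_mul, mul_one]
            ring
          have hdecomp : y = (θ a y) • a + (y - (θ a y) • a) := by
            rw [add_sub_cancel]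
          calc θ x y = θ x ((θ a y) • a + (y - (θ a y) • a)) := by rw [← hdecomp]
            _ = θ a y * θ x a + θ x (y - (θ a y) • a) := by
                rw [hbθ.2.1, hbθ.2.2.2, smul_eq_mul]
            _ = 0 := by
                rw [hsθ x a, hxa, mul_zero, hpol x hx _ hya, add_zero]
        have hmono := Submodule.finrank_mono hker_le
        rw [hkerd, hWcase] at hmono
        omega
      obtain ⟨b0, hb0ker, hb0⟩ := hbex
      obtain ⟨s2, hs2⟩ := IsAlgClosed.exists_pow_nat_eq ((θ b0 b0)⁻¹) (n := 2) two_pos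
      set b := s2 • b0 with hbdef
      have hs20 : s2 ≠ 0 := by
        intro h
        rw [h] at hs2
        simp only [ne_eq, zero_pow, OfNat.ofNat_ne_zero, not_false_eq_true] at hs2
        exact hb0 (by simpa using (inv_eq_zero.mp hs2.symm))
      have hbker : b ∈ LinearMap.ker La := Submodule.smul_mem _ _ hb0ker
      have hθbb : θ b b = 1 := by
        rw [hbdef, hbθ.2.2.1, hbθ.2.2.2, smul_eq_mul, smul_eq_mul, ← mul_assoc, ← sq, hs2,
          inv_mul_cancel₀ hb0]
      have hθab : θ a b = 0 := by
        have := hbker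
        rw [LinearMap.mem_ker, hLadef] at this
        exact this ▸ rfl
      have hθba : θ b a = 0 := by rw [hsθ]; exact hθab
      have hli : LinearIndependent K (![a, b, c] : Fin 3 → M) := by
        rw [Fintype.linearIndependent_iff]
        intro g hg
        have hsum : g 0 • a + g 1 • b + g 2 • c = 0 := by
          simpa [Fin.sum_univ_three] using hg
        have hg0 : g 0 = 0 := by
          have h0 := congrArg (fun z => Θ z a) hsum
          simp only [map_add, map_smul, LinearMap.add_apply, LinearMap.smul_apply,
            map_zero, LinearMap.zero_apply] at h0
          have : g 0 • θ a a + g 1 • θ b a + g 2 • θ c a = 0 := h0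
          rw [hθaa, hθba, hθcx a, smul_zero, smul_zero, smul_eq_mul, mul_one,
            add_zero, add_zero] at this
          exact this
        have hg1 : g 1 = 0 := by
          have h0 := congrArg (fun z => Θ z b) hsum
          simp only [map_add, map_smul, LinearMap.add_apply, LinearMap.smul_apply,
            map_zero, LinearMap.zero_apply] at h0
          have : g 0 • θ a b + g 1 • θ b b + g 2 • θ c b = 0 := h0
          rw [hθab, hθbb, hθcx b, smul_zero, smul_zero, smul_eq_mul, mul_one,
            zero_add, add_zero] at this
          exact this
        have hg2 : g 2 = 0 := by
          rw [hg0, hg1, zero_smul, zero_smul, zero_add, zero_add] at hsum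
          exact (smul_eq_zero.mp hsum).resolve_right hc0
        intro i
        fin_cases i <;> assumption
      have hcard : Fintype.card (Fin 3) = finrank K M := by simp [h3]
      set B := basisOfLinearIndependentOfCardEqFinrank hli hcard with hBdef
      have hBc : ⇑B = (![a, b, c] : Fin 3 → M) := coe_basisOfLinearIndependentOfCardEqFinrank _ _
      refine Or.inr (Or.inr (Or.inl ?_))
      refine jiso_of_basis hb (jordan_m33 K).1 B (Pi.basisFun K (Fin 3)) ?_
      have hec : (B.equiv (Pi.basisFun K (Fin 3)) (Equiv.refl _)) c
          = Pi.basisFun K (Fin 3) 2 := by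
        have hc2 : c = B 2 := by rw [hBc]; rfl
        rw [hc2, Basis.equiv_apply, Equiv.refl_apply]
      intro i j
      rw [hmulc (B i) (B j), map_smul, hec, m33_prod, ← pbf2 K]
      congr 1
      fin_cases i <;> fin_cases j <;>
        simp [hBc, pbf0, pbf1, pbf2, hθaa, hθbb, hθab, hθba, hθxc, hθcx]
    · -- rank 1 : m32
      have hle : Submodule.span K {c} ≤ LinearMap.ker Θ :=
        (Submodule.span_singleton_le_iff_mem _ _).mpr hcW
      have hltW : Submodule.span K {c} < LinearMap.ker Θ := by
        refine lt_of_le_of_ne hle ?_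
        intro h
        rw [← h, finrank_span_singleton hc0] at hWcase
        omega
      obtain ⟨d, hdW, hdc⟩ := SetLike.exists_of_lt hltW
      have hθd : ∀ y, θ d y = 0 := (hmemW d).mp hdW
      have hθad : θ a d = 0 := by rw [hsθ]; exact hθd a
      have hli : LinearIndependent K (![a, c, d] : Fin 3 → M) := by
        rw [Fintype.linearIndependent_iff]
        intro g hg
        have hsum : g 0 • a + g 1 • c + g 2 • d = 0 := by
          simpa [Fin.sum_univ_three] using hg
        have hg0 : g 0 = 0 := by
          have h0 := congrArg (fun z => Θ z a) hsum
          simp only [map_add, map_smul, LinearMap.add_apply, LinearMap.smul_apply,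
            map_zero, LinearMap.zero_apply] at h0
          have : g 0 • θ a a + g 1 • θ c a + g 2 • θ d a = 0 := h0
          rw [hθaa, hθcx a, hθd a, smul_zero, smul_zero, smul_eq_mul, mul_one,
            add_zero, add_zero] at this
          exact this
        have hg2 : g 2 = 0 := by
          by_contra hne
          have hd : d = (g 2)⁻¹ • (-(g 1 • c)) := by
            rw [hg0, zero_smul, zero_add] at hsum
            have : g 2 • d = -(g 1 • c) := eq_neg_of_add_eq_zero_right hsum
            rw [← this, smul_smul, inv_mul_cancel₀ hne, one_smul]
          refine hdc ?_
          rw [hd]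
          refine Submodule.smul_mem _ _ (Submodule.neg_mem _ (Submodule.smul_mem _ _ ?_))
          exact Submodule.mem_span_singleton_self c
        have hg1 : g 1 = 0 := by
          rw [hg0, hg2, zero_smul, zero_smul, zero_add, add_zero] at hsum
          exact (smul_eq_zero.mp hsum).resolve_right hc0
        intro i
        fin_cases i <;> assumption
      have hcard : Fintype.card (Fin 3) = finrank K M := by simp [h3]
      set B := basisOfLinearIndependentOfCardEqFinrank hli hcard with hBdef
      have hBc : ⇑B = (![a, c, d] : Fin 3 → M) := coe_basisOfLinearIndependentOfCardEqFinrank _ _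
      refine Or.inr (Or.inl ?_)
      refine jiso_of_basis hb (jordan_m32 K).1 B (Pi.basisFun K (Fin 3)) ?_
      have hec : (B.equiv (Pi.basisFun K (Fin 3)) (Equiv.refl _)) c
          = Pi.basisFun K (Fin 3) 1 := by
        have hc1 : c = B 1 := by rw [hBc]; rfl
        rw [hc1, Basis.equiv_apply, Equiv.refl_apply]
      intro i j
      rw [hmulc (B i) (B j), map_smul, hec, m32_prod, ← pbf1 K]
      congr 1
      fin_cases i <;> fin_cases j <;>
        simp [hBc, pbf0, pbf1, pbf2, hθaa, hθad, hθxc, hθcx, hθd]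
  · -- dim J² = 2 : m34
    have hJ2ne : lcs K mul 1 ≠ ⊥ := by
      intro h
      rw [h] at hcase
      simp [finrank_bot] at hcase
    have hlt2 : lcs K mul 2 < lcs K mul 1 := lcs_succ_lt hN hJ2ne
    have hd2 : finrank K (lcs K mul 2) < 2 := by
      have := Submodule.finrank_lt_finrank_of_lt hlt2
      rwa [hcase] at this
    obtain ⟨a, -, haJ2⟩ := SetLike.exists_of_lt hlt1
    have hsup : Submodule.span K {a} ⊔ lcs K mul 1 = ⊤ := by
      have hltsup : lcs K mul 1 < Submodule.span K {a} ⊔ lcs K mul 1 := by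
        refine lt_of_le_of_ne le_sup_right ?_
        intro h
        exact haJ2 (h ▸ Submodule.mem_sup_left (Submodule.mem_span_singleton_self a))
      have hgt := Submodule.finrank_lt_finrank_of_lt hltsup
      rw [hcase] at hgt
      have hle3 := Submodule.finrank_le (Submodule.span K {a} ⊔ lcs K mul 1)
      rw [h3] at hle3
      exact Submodule.eq_top_of_finrank_eq (by rw [h3]; omega)
    have hdec : ∀ x : M, ∃ α : K, ∃ u ∈ lcs K mul 1, x = α • a + u := by
      intro x
      have hx : x ∈ Submodule.span K {a} ⊔ lcs K mul 1 := by rw [hsup]; trivial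
      rw [Submodule.mem_sup] at hx
      obtain ⟨y, hy, u, hu, hyu⟩ := hx
      obtain ⟨α, rfl⟩ := Submodule.mem_span_singleton.mp hy
      exact ⟨α, u, hu, hyu.symm⟩
    have hd2cases : finrank K (lcs K mul 2) = 0 ∨ finrank K (lcs K mul 2) = 1 := by omega
    rcases hd2cases with hcase2 | hcase2
    · -- impossible
      exfalso
      have hbot : lcs K mul 2 = ⊥ := Submodule.finrank_eq_zero.mp hcase2
      have hz : ∀ u ∈ lcs K mul 1, ∀ y, mul u y = 0 :=
        lcs_succ_eq_bot_iff.mp (show lcs K mul (1 + 1) = ⊥ from hbot)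
      have hle : lcs K mul 1 ≤ Submodule.span K {mul a a} := by
        refine lcs_succ_le_of (n := 0) ?_
        intro x _ y
        obtain ⟨α, u, hu, rfl⟩ := hdec x
        obtain ⟨β, v, hv, rfl⟩ := hdec y
        rw [hb.1, hb.2.2.1, hz u hu _, hb.2.1, hb.2.2.2,
          show mul a v = 0 from (hcm a v).trans (hz v hv a), add_zero, add_zero]
        exact Submodule.smul_mem _ _ (Submodule.smul_mem _ _
          (Submodule.mem_span_singleton_self _))
      have hmono := Submodule.finrank_mono hle
      rw [hcase] at hmono
      rcases eq_or_ne (mul a a) 0 with h0 | h0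
      · rw [h0, Submodule.span_zero_singleton] at hmono
        simp [finrank_bot] at hmono
      · rw [finrank_span_singleton h0] at hmono
        omega
    · -- dim J³ = 1
      have hJ3ne : lcs K mul 2 ≠ ⊥ := by
        intro h
        rw [h] at hcase2
        simp [finrank_bot] at hcase2
      have hlt3 : lcs K mul 3 < lcs K mul 2 := lcs_succ_lt hN hJ3ne
      have hd3 : finrank K (lcs K mul 3) = 0 := by
        have := Submodule.finrank_lt_finrank_of_lt hlt3
        omega
      have h4bot : lcs K mul 3 = ⊥ := Submodule.finrank_eq_zero.mp hd3
      have hz3 : ∀ w ∈ lcs K mul 2, ∀ y, mul w y = 0 :=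
        lcs_succ_eq_bot_iff.mp (show lcs K mul (2 + 1) = ⊥ from h4bot)
      set b := mul a a with hbdef
      have hbJ2 : b ∈ lcs K mul 1 := mul_mem_lcs_one (K := K) mul a a
      have hJ2le : lcs K mul 1 ≤ Submodule.span K {b} ⊔ lcs K mul 2 := by
        refine lcs_succ_le_of (n := 0) ?_
        intro x _ y
        obtain ⟨α, u, hu, rfl⟩ := hdec x
        obtain ⟨β, v, hv, rfl⟩ := hdec y
        rw [hb.1, hb.2.2.1, hb.2.1, hb.2.2.2]
        refine Submodule.add_mem _ (Submodule.smul_mem _ _ (Submodule.add_mem _ ?_ ?_))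
          (Submodule.mem_sup_right ?_)
        · exact Submodule.smul_mem _ _ (Submodule.mem_sup_left
            (Submodule.mem_span_singleton_self b))
        · rw [hcm a v]
          exact Submodule.mem_sup_right (mul_mem_lcs_succ hv a)
        · exact mul_mem_lcs_succ hu _
      have hbb : mul b b = 0 := by
        have hjaa := hjd a a
        rw [← hbdef] at hjaa
        rw [hjaa, hcm a (mul b a), hz3 _ (mul_mem_lcs_succ hbJ2 a) a]
      set c := mul a b with hcdef
      have hcJ3 : c ∈ lcs K mul 2 := by
        rw [hcdef, hcm]
        exact mul_mem_lcs_succ hbJ2 a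
      have hJ3le : lcs K mul 2 ≤ Submodule.span K {c} := by
        refine lcs_succ_le_of (n := 1) ?_
        intro u hu y
        have husup := hJ2le hu
        rw [Submodule.mem_sup] at husup
        obtain ⟨p, hp, w, hw, hpw⟩ := husup
        obtain ⟨s, rfl⟩ := Submodule.mem_span_singleton.mp hp
        rw [← hpw, hb.1, hb.2.2.1, hz3 w hw y, add_zero]
        obtain ⟨γ, v, hv, rfl⟩ := hdec y
        have hvsup := hJ2le hv
        rw [Submodule.mem_sup] at hvsup
        obtain ⟨q, hq, w', hw', hqw'⟩ := hvsup
        obtain ⟨t, rfl⟩ := Submodule.mem_span_singleton.mp hq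
        rw [← hqw', hb.2.1, hb.2.2.2, hb.2.1, hb.2.2.2, hbb, smul_zero,
          show mul b w' = 0 from (hcm b w').trans (hz3 w' hw' b), zero_add, add_zero,
          hcm b a, ← hcdef]
        exact Submodule.smul_mem _ _ (Submodule.smul_mem _ _
          (Submodule.mem_span_singleton_self c))
      have hc0 : c ≠ 0 := by
        intro h
        rw [h, Submodule.span_zero_singleton] at hJ3le
        have := Submodule.finrank_mono hJ3le
        rw [hcase2] at this
        simp [finrank_bot] at this
      have hbJ3 : b ∉ lcs K mul 2 := by
        intro hmem
        have hle12 : lcs K mul 1 ≤ lcs K mul 2 :=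
          le_trans hJ2le (sup_le ((Submodule.span_singleton_le_iff_mem _ _).mpr hmem) le_rfl)
        have := Submodule.finrank_mono hle12
        rw [hcase, hcase2] at this
        omega
      -- product table
      have hba : mul b a = c := by rw [hcm, ← hcdef]
      have hac : mul a c = 0 := by rw [hcm]; exact hz3 c hcJ3 a
      have hca : mul c a = 0 := hz3 c hcJ3 a
      have hbc : mul b c = 0 := by rw [hcm]; exact hz3 c hcJ3 b
      have hcb : mul c b = 0 := hz3 c hcJ3 b
      have hcc : mul c c = 0 := hz3 c hcJ3 c
      have hli : LinearIndependent K (![a, b, c] : Fin 3 → M) := by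
        rw [Fintype.linearIndependent_iff]
        intro g hg
        have hsum : g 0 • a + g 1 • b + g 2 • c = 0 := by
          simpa [Fin.sum_univ_three] using hg
        have hg0 : g 0 = 0 := by
          by_contra hne
          refine haJ2 ?_
          have h' : g 0 • a + (g 1 • b + g 2 • c) = 0 := by rw [← add_assoc]; exact hsum
          have ha' : g 0 • a = -(g 1 • b + g 2 • c) := eq_neg_of_add_eq_zero_left h'
          have : a = (g 0)⁻¹ • -(g 1 • b + g 2 • c) := by
            rw [← ha', smul_smul, inv_mul_cancel₀ hne, one_smul]
          rw [this]
          exact Submodule.smul_mem _ _ (Submodule.neg_mem _ (Submodule.add_mem _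
            (Submodule.smul_mem _ _ hbJ2)
            (Submodule.smul_mem _ _ (lcs_succ_le mul 1 hcJ3))))
        have hg1 : g 1 = 0 := by
          by_contra hne
          refine hbJ3 ?_
          rw [hg0, zero_smul, zero_add] at hsum
          have hb' : g 1 • b = -(g 2 • c) := eq_neg_of_add_eq_zero_left hsum
          have : b = (g 1)⁻¹ • -(g 2 • c) := by
            rw [← hb', smul_smul, inv_mul_cancel₀ hne, one_smul]
          rw [this]
          exact Submodule.smul_mem _ _ (Submodule.neg_mem _ (Submodule.smul_mem _ _ hcJ3))
        have hg2 : g 2 = 0 := by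
          rw [hg0, hg1, zero_smul, zero_smul, zero_add, zero_add] at hsum
          exact (smul_eq_zero.mp hsum).resolve_right hc0
        intro i
        fin_cases i <;> assumption
      have hcard : Fintype.card (Fin 3) = finrank K M := by simp [h3]
      set B := basisOfLinearIndependentOfCardEqFinrank hli hcard with hBdef
      have hBc : ⇑B = (![a, b, c] : Fin 3 → M) := coe_basisOfLinearIndependentOfCardEqFinrank _ _
      refine Or.inr (Or.inr (Or.inr ?_))
      refine jiso_of_basis hb (jordan_m34 K).1 B (Pi.basisFun K (Fin 3)) ?_
      have heb : (B.equiv (Pi.basisFun K (Fin 3)) (Equiv.refl (Fin 3))) b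
          = ![(0 : K), 1, 0] := by
        rw [show b = B 1 from (by rw [hBc]; rfl), Basis.equiv_apply, Equiv.refl_apply, pbf1]
      have hec : (B.equiv (Pi.basisFun K (Fin 3)) (Equiv.refl (Fin 3))) c
          = ![(0 : K), 0, 1] := by
        rw [show c = B 2 from (by rw [hBc]; rfl), Basis.equiv_apply, Equiv.refl_apply, pbf2]
      have e00 : (B.equiv (Pi.basisFun K (Fin 3)) (Equiv.refl (Fin 3))) (mul a a)
          = ![(0 : K), 1, 0] := by rw [← hbdef]; exact heb
      have e01 : (B.equiv (Pi.basisFun K (Fin 3)) (Equiv.refl (Fin 3))) (mul a b)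
          = ![(0 : K), 0, 1] := by rw [← hcdef]; exact hec
      have e10 : (B.equiv (Pi.basisFun K (Fin 3)) (Equiv.refl (Fin 3))) (mul b a)
          = ![(0 : K), 0, 1] := by rw [hba]; exact hec
      have eac : (B.equiv (Pi.basisFun K (Fin 3)) (Equiv.refl (Fin 3))) (mul a c) = 0 := by
        rw [hac, map_zero]
      have eca : (B.equiv (Pi.basisFun K (Fin 3)) (Equiv.refl (Fin 3))) (mul c a) = 0 := by
        rw [hca, map_zero]
      have ebb : (B.equiv (Pi.basisFun K (Fin 3)) (Equiv.refl (Fin 3))) (mul b b) = 0 := by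
        rw [hbb, map_zero]
      have ebc : (B.equiv (Pi.basisFun K (Fin 3)) (Equiv.refl (Fin 3))) (mul b c) = 0 := by
        rw [hbc, map_zero]
      have ecb : (B.equiv (Pi.basisFun K (Fin 3)) (Equiv.refl (Fin 3))) (mul c b) = 0 := by
        rw [hcb, map_zero]
      have ecc : (B.equiv (Pi.basisFun K (Fin 3)) (Equiv.refl (Fin 3))) (mul c c) = 0 := by
        rw [hcc, map_zero]
      have key : ∀ i j : Fin 3, (B.equiv (Pi.basisFun K (Fin 3)) (Equiv.refl (Fin 3)))
          (mul (B i) (B j)) = m34 K (Pi.basisFun K (Fin 3) i) (Pi.basisFun K (Fin 3) j) := by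
        intro i j
        fin_cases i <;> fin_cases j <;>
          simp only [Fin.zero_eta, Fin.mk_one, Fin.reduceFinMk, hBc,
            Matrix.cons_val_zero, Matrix.cons_val_one, Matrix.head_cons,
            Matrix.cons_val_two, Matrix.tail_cons, pbf0, pbf1, pbf2,
            e00, e01, e10, eac, eca, ebb, ebc, ecb, ecc] <;>
          (funext t; fin_cases t <;> simp [m34])
      intro i j
      exact key i j


end Classify

/-- over an algebraically closed field of characteristic ≠ 2 there are,
up to isomorphism, exactly 4 nilpotent Jordan algebras of dimension 3. -/
theorem stmt13 (K : Type*) [Field K] [IsAlgClosed K] (h2 : (2 : K) ≠ 0) :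
    (IsJordanAlg K (m31 K) ∧ IsNilpotentAlg K (m31 K)) ∧
    (IsJordanAlg K (m32 K) ∧ IsNilpotentAlg K (m32 K)) ∧
    (IsJordanAlg K (m33 K) ∧ IsNilpotentAlg K (m33 K)) ∧
    (IsJordanAlg K (m34 K) ∧ IsNilpotentAlg K (m34 K)) ∧
    (¬ JIso K (m31 K) (m32 K)) ∧ (¬ JIso K (m31 K) (m33 K)) ∧ (¬ JIso K (m31 K) (m34 K)) ∧
    (¬ JIso K (m32 K) (m33 K)) ∧ (¬ JIso K (m32 K) (m34 K)) ∧ (¬ JIso K (m33 K) (m34 K)) ∧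
    ∀ (M : Type*) [AddCommGroup M] [Module K M] (mul : M → M → M),
      Module.finrank K M = 3 → IsJordanAlg K mul → IsNilpotentAlg K mul →
      (JIso K mul (m31 K) ∨ JIso K mul (m32 K) ∨ JIso K mul (m33 K) ∨ JIso K mul (m34 K)) := by
  refine ⟨⟨jordan_m31 K, nilp_m31 K⟩, ⟨jordan_m32 K, nilp_m32 K⟩, ⟨jordan_m33 K, nilp_m33 K⟩,
    ⟨jordan_m34 K, nilp_m34 K⟩, ?_, ?_, ?_, not_jiso_m32_m33 K, ?_, ?_, ?_⟩
  · refine nonIso_of_zero (fun x y => rfl) ![1, 0, 0] ![1, 0, 0] ?_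
    intro h
    have := congrFun h 1
    simp [m32] at this
  · refine nonIso_of_zero (fun x y => rfl) ![1, 0, 0] ![1, 0, 0] ?_
    intro h
    have := congrFun h 2
    simp [m33] at this
  · refine nonIso_of_zero (fun x y => rfl) ![1, 0, 0] ![1, 0, 0] ?_
    intro h
    have := congrFun h 1
    simp [m34] at this
  · exact not_jiso_m34_aux K ![0, 1, 0] (fun x y => ⟨x 0 * y 0, m32_prod K x y⟩)
  · exact not_jiso_m34_aux K ![0, 0, 1] (fun x y => ⟨x 0 * y 0 + x 1 * y 1, m33_prod K x y⟩)
  · intro M _ _ mul h3 hJ hN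
    exact classify K h2 mul h3 hJ hN
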